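/- Fix p ∈ [1,∞) and metric spaces (X,d_X), (Y,d_Y). (i) If Ψ : (0,∞) → (0,∞) is an increasing function such that γ(A, d_X^p) ≤ Ψ(γ(A, d_Y^p)) for every n ∈ ℕ and every n×n symmetric stochastic matrix A, then γ₊(A, d_X^p) ≤ 2·Ψ(2^p·γ₊(A, d_Y^p)) for every n ∈ ℕ and every n×n symmetric stochastic matrix A. (ii) Conversely, if Φ : (0,∞) → (0,∞) is an increasing function such that γ₊(A, d_X^p) ≤ Φ(γ₊(A, d_Y^p)) for every n ∈ ℕ and every n×n symmetric stochastic matrix A, then γ(A, d_X^p) ≤ (1/2)·Φ(2^{2p+1}·γ(A, d_Y^p)) for every n ∈ ℕ and every n×n symmetric stochastic matrix A. -/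

import Mathlib

open scoped ENNReal

/-- An `n × n` real matrix is symmetric and stochastic. -/
def IsSymmStochastic {n : ℕ} (A : Matrix (Fin n) (Fin n) ℝ) : Prop :=
  (∀ i j, A i j = A j i) ∧ (∀ i j, 0 ≤ A i j) ∧ ∀ i, ∑ j, A i j = 1

/-- The nonlinear spectral gap quantity `γ(A, d_X^p)`. -/
noncomputable def gammaNL {n : ℕ} (A : Matrix (Fin n) (Fin n) ℝ)
    (X : Type*) [PseudoMetricSpace X] (p : ℝ) : ℝ≥0∞ :=
  sInf {g : ℝ≥0∞ | 0 < g ∧ ∀ x : Fin n → X,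
    ENNReal.ofReal ((∑ i, ∑ j, dist (x i) (x j) ^ p) / (n : ℝ) ^ 2) ≤
      g / (n : ℝ≥0∞) * ENNReal.ofReal (∑ i, ∑ j, A i j * dist (x i) (x j) ^ p)}

/-- The absolute nonlinear spectral gap quantity `γ₊(A, d_X^p)`. -/
noncomputable def gammaPlusNL {n : ℕ} (A : Matrix (Fin n) (Fin n) ℝ)
    (X : Type*) [PseudoMetricSpace X] (p : ℝ) : ℝ≥0∞ :=
  sInf {g : ℝ≥0∞ | 0 < g ∧ ∀ x y : Fin n → X,
    ENNReal.ofReal ((∑ i, ∑ j, dist (x i) (y j) ^ p) / (n : ℝ) ^ 2) ≤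
      g / (n : ℝ≥0∞) * ENNReal.ofReal (∑ i, ∑ j, A i j * dist (x i) (y j) ^ p)}

open Finset

noncomputable def Ssum {n : ℕ} {X : Type*} [PseudoMetricSpace X] (p : ℝ) (x y : Fin n → X) : ℝ :=
  ∑ i, ∑ j, dist (x i) (y j) ^ p

noncomputable def Qsum {n : ℕ} (A : Matrix (Fin n) (Fin n) ℝ) {X : Type*} [PseudoMetricSpace X]
    (p : ℝ) (x y : Fin n → X) : ℝ :=
  ∑ i, ∑ j, A i j * dist (x i) (y j) ^ p

noncomputable def Dsum {n : ℕ} {X : Type*} [PseudoMetricSpace X] (p : ℝ) (x y : Fin n → X) : ℝ :=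
  ∑ i, dist (x i) (y i) ^ p

section Sums
variable {p : ℝ} {n : ℕ} {X : Type*} [PseudoMetricSpace X]

lemma Ssum_nonneg (x y : Fin n → X) : 0 ≤ Ssum p x y := by
  refine Finset.sum_nonneg fun i _ => Finset.sum_nonneg fun j _ => ?_
  exact Real.rpow_nonneg dist_nonneg _

lemma Dsum_nonneg (x y : Fin n → X) : 0 ≤ Dsum p x y :=
  Finset.sum_nonneg fun i _ => Real.rpow_nonneg dist_nonneg _

lemma Qsum_nonneg {A : Matrix (Fin n) (Fin n) ℝ} (hA : ∀ i j, 0 ≤ A i j) (x y : Fin n → X) :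
    0 ≤ Qsum A p x y := by
  refine Finset.sum_nonneg fun i _ => Finset.sum_nonneg fun j _ => ?_
  exact mul_nonneg (hA i j) (Real.rpow_nonneg dist_nonneg _)

lemma Ssum_comm (x y : Fin n → X) : Ssum p x y = Ssum p y x := by
  rw [Ssum, Finset.sum_comm]
  exact Finset.sum_congr rfl fun i _ => Finset.sum_congr rfl fun j _ => by rw [dist_comm]

lemma Qsum_comm {A : Matrix (Fin n) (Fin n) ℝ} (hA : ∀ i j, A i j = A j i) (x y : Fin n → X) :
    Qsum A p x y = Qsum A p y x := by
  rw [Qsum, Finset.sum_comm]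
  exact Finset.sum_congr rfl fun i _ => Finset.sum_congr rfl fun j _ => by
    rw [dist_comm, hA j i]
end Sums

section Core
variable {p : ℝ} {n : ℕ} {X : Type*} [PseudoMetricSpace X]

lemma two_rpow_helper (a b : ℝ) (ha : 0 ≤ a) (hb : 0 ≤ b) (hp : 1 ≤ p) :
    (a + b) ^ p ≤ (2:ℝ) ^ (p - 1) * (a ^ p + b ^ p) := by
  have h := NNReal.rpow_add_le_mul_rpow_add_rpow a.toNNReal b.toNNReal hp
  have h2 := (NNReal.coe_le_coe.mpr h)
  push_cast at h2
  rwa [Real.coe_toNNReal _ ha, Real.coe_toNNReal _ hb] at h2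

lemma tri_rpow (hp : 1 ≤ p) (a b c : X) :
    dist a c ^ p ≤ (2:ℝ) ^ (p - 1) * (dist a b ^ p + dist b c ^ p) := by
  calc dist a c ^ p ≤ (dist a b + dist b c) ^ p :=
        Real.rpow_le_rpow dist_nonneg (dist_triangle a b c) (by linarith)
    _ ≤ _ := two_rpow_helper _ _ dist_nonneg dist_nonneg hp

lemma two_rpow_split : (2:ℝ) ^ (p-1) * 2 = 2 ^ p := by
  nth_rewrite 2 [show (2:ℝ) = (2:ℝ) ^ (1:ℝ) by rw [Real.rpow_one]]
  rw [← Real.rpow_add two_pos, sub_add_cancel]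

/-- averaging: `S(x,x) ≤ 2^p S(x,y)` -/
lemma Ssum_self_le (hp : 1 ≤ p) (hn : 0 < n) (x y : Fin n → X) :
    Ssum p x x ≤ 2 ^ p * Ssum p x y := by
  have hN : (0:ℝ) < n := by exact_mod_cast hn
  have key : ∀ i j : Fin n, (n:ℝ) * dist (x i) (x j) ^ p
      ≤ (2:ℝ)^(p-1) * ((∑ k, dist (x i) (y k) ^ p) + ∑ k, dist (x j) (y k) ^ p) := by
    intro i j
    calc (n:ℝ) * dist (x i) (x j) ^ p = ∑ _k : Fin n, dist (x i) (x j) ^ p := by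
          rw [Finset.sum_const, Finset.card_univ, Fintype.card_fin, nsmul_eq_mul]
      _ ≤ ∑ k, (2:ℝ)^(p-1) * (dist (x i) (y k) ^ p + dist (x j) (y k) ^ p) := by
          refine Finset.sum_le_sum fun k _ => ?_
          have := tri_rpow hp (x i) (y k) (x j)
          rwa [dist_comm (y k) (x j)] at this
      _ = _ := by rw [← Finset.mul_sum, Finset.sum_add_distrib]
  have main : (n:ℝ) * Ssum p x x ≤ (2:ℝ)^(p-1) * (2 * ((n:ℝ) * Ssum p x y)) := by
    rw [Ssum, Finset.mul_sum]
    simp_rw [Finset.mul_sum]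
    calc ∑ i, ∑ j, (n:ℝ) * dist (x i) (x j) ^ p
        ≤ ∑ i, ∑ j, (2:ℝ)^(p-1) * ((∑ k, dist (x i) (y k) ^ p) + ∑ k, dist (x j) (y k) ^ p) :=
          Finset.sum_le_sum fun i _ => Finset.sum_le_sum fun j _ => key i j
      _ = (2:ℝ)^(p-1) * (2 * ((n:ℝ) * Ssum p x y)) := by
          simp_rw [← Finset.mul_sum]
          rw [Ssum]
          congr 1
          calc ∑ i, ∑ j, ((∑ k, dist (x i) (y k) ^ p) + ∑ k, dist (x j) (y k) ^ p)
              = ∑ i, ((n:ℝ) * (∑ k, dist (x i) (y k) ^ p) + ∑ j, ∑ k, dist (x j) (y k) ^ p) :=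
                Finset.sum_congr rfl fun i _ => by
                  rw [Finset.sum_add_distrib, Finset.sum_const, Finset.card_univ,
                    Fintype.card_fin, nsmul_eq_mul]
            _ = (n:ℝ) * (∑ i, ∑ k, dist (x i) (y k) ^ p)
                  + (n:ℝ) * (∑ j, ∑ k, dist (x j) (y k) ^ p) := by
                rw [Finset.sum_add_distrib, ← Finset.mul_sum, Finset.sum_const, Finset.card_univ,
                  Fintype.card_fin, nsmul_eq_mul]
            _ = 2 * ((n:ℝ) * Ssum p x y) := by rw [Ssum]; ring
      _ = _ := rfl
  have main' : (n:ℝ) * Ssum p x x ≤ (n:ℝ) * (2 ^ p * Ssum p x y) := by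
    calc (n:ℝ) * Ssum p x x ≤ (2:ℝ)^(p-1) * (2 * ((n:ℝ) * Ssum p x y)) := main
      _ = (2:ℝ)^(p-1) * 2 * ((n:ℝ) * Ssum p x y) := by ring
      _ = (n:ℝ) * (2 ^ p * Ssum p x y) := by rw [two_rpow_split]; ring
  exact le_of_mul_le_mul_left main' hN

/-- `S(x,y) ≤ 2^{p-1} (S(x,x) + n·D(x,y))` -/
lemma Ssum_le_self_add (hp : 1 ≤ p) (x y : Fin n → X) :
    Ssum p x y ≤ (2:ℝ)^(p-1) * (Ssum p x x + (n:ℝ) * Dsum p x y) := by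
  calc Ssum p x y ≤ ∑ i, ∑ j, (2:ℝ)^(p-1) * (dist (x i) (x j) ^ p + dist (x j) (y j) ^ p) :=
        Finset.sum_le_sum fun i _ => Finset.sum_le_sum fun j _ => tri_rpow hp (x i) (x j) (y j)
    _ = (2:ℝ)^(p-1) * (Ssum p x x + (n:ℝ) * Dsum p x y) := by
        simp_rw [← Finset.mul_sum]
        congr 1
        rw [Ssum, Dsum]
        simp_rw [Finset.sum_add_distrib]
        congr 1
        rw [Finset.sum_const, Finset.card_univ, Fintype.card_fin, nsmul_eq_mul]

/-- `Q(x,x) ≤ 2^{p-1} (Q(x,y) + D(x,y))` for symmetric stochastic `A`. -/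
lemma Qsum_self_le (hp : 1 ≤ p) {A : Matrix (Fin n) (Fin n) ℝ} (hA : IsSymmStochastic A)
    (x y : Fin n → X) :
    Qsum A p x x ≤ (2:ℝ)^(p-1) * (Qsum A p x y + Dsum p x y) := by
  have hcol : ∀ j, ∑ i, A i j = 1 := fun j => by
    rw [Finset.sum_congr rfl fun i _ => hA.1 i j]; exact hA.2.2 j
  calc Qsum A p x x
      ≤ ∑ i, ∑ j, A i j * ((2:ℝ)^(p-1) * (dist (x i) (y j) ^ p + dist (x j) (y j) ^ p)) := by
        refine Finset.sum_le_sum fun i _ => Finset.sum_le_sum fun j _ => ?_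
        refine mul_le_mul_of_nonneg_left ?_ (hA.2.1 i j)
        have := tri_rpow hp (x i) (y j) (x j)
        rwa [dist_comm (y j) (x j)] at this
    _ = (2:ℝ)^(p-1) * (Qsum A p x y + ∑ i, ∑ j, A i j * dist (x j) (y j) ^ p) := by
        have hpt : ∀ i j : Fin n, A i j * ((2:ℝ)^(p-1) * (dist (x i) (y j) ^ p
            + dist (x j) (y j) ^ p)) = (2:ℝ)^(p-1) * (A i j * dist (x i) (y j) ^ p)
            + (2:ℝ)^(p-1) * (A i j * dist (x j) (y j) ^ p) := fun i j => by ring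
        simp_rw [hpt, Finset.sum_add_distrib, ← Finset.mul_sum]
        rw [Qsum, mul_add]
    _ = (2:ℝ)^(p-1) * (Qsum A p x y + Dsum p x y) := by
        congr 2
        rw [Finset.sum_comm, Dsum]
        refine Finset.sum_congr rfl fun j _ => ?_
        rw [← Finset.sum_mul, hcol j, one_mul]
end Core

def dbl {n : ℕ} (A : Matrix (Fin n) (Fin n) ℝ) : Matrix (Fin (n+n)) (Fin (n+n)) ℝ :=
  fun i j =>
    Fin.addCases (fun i₁ => Fin.addCases (fun _ => (0:ℝ)) (fun j₂ => A i₁ j₂) j)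
      (fun i₂ => Fin.addCases (fun j₁ => A i₂ j₁) (fun _ => (0:ℝ)) j) i

noncomputable def halfId {n : ℕ} (A : Matrix (Fin n) (Fin n) ℝ) : Matrix (Fin n) (Fin n) ℝ :=
  fun i j => (A i j + if i = j then 1 else 0) / 2

section Dbl
variable {p : ℝ} {n : ℕ} {X : Type*} [PseudoMetricSpace X] {A : Matrix (Fin n) (Fin n) ℝ}

lemma dbl_ll (i j : Fin n) : dbl A (Fin.castAdd n i) (Fin.castAdd n j) = 0 := by
  unfold dbl; rw [Fin.addCases_left, Fin.addCases_left]
lemma dbl_lr (i j : Fin n) : dbl A (Fin.castAdd n i) (Fin.natAdd n j) = A i j := by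
  unfold dbl; rw [Fin.addCases_left, Fin.addCases_right]
lemma dbl_rl (i j : Fin n) : dbl A (Fin.natAdd n i) (Fin.castAdd n j) = A i j := by
  unfold dbl; rw [Fin.addCases_right, Fin.addCases_left]
lemma dbl_rr (i j : Fin n) : dbl A (Fin.natAdd n i) (Fin.natAdd n j) = 0 := by
  unfold dbl; rw [Fin.addCases_right, Fin.addCases_right]

lemma dbl_isSymmStochastic (hA : IsSymmStochastic A) : IsSymmStochastic (dbl A) := by
  refine ⟨fun i j => ?_, fun i j => ?_, fun i => ?_⟩
  · induction i using Fin.addCases with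
    | left i₁ => induction j using Fin.addCases with
      | left j₁ => rw [dbl_ll, dbl_ll]
      | right j₂ => rw [dbl_lr, dbl_rl, hA.1 i₁ j₂]
    | right i₂ => induction j using Fin.addCases with
      | left j₁ => rw [dbl_rl, dbl_lr, hA.1 i₂ j₁]
      | right j₂ => rw [dbl_rr, dbl_rr]
  · induction i using Fin.addCases with
    | left i₁ => induction j using Fin.addCases with
      | left j₁ => rw [dbl_ll]
      | right j₂ => rw [dbl_lr]; exact hA.2.1 i₁ j₂
    | right i₂ => induction j using Fin.addCases with
      | left j₁ => rw [dbl_rl]; exact hA.2.1 i₂ j₁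
      | right j₂ => rw [dbl_rr]
  · induction i using Fin.addCases with
    | left i₁ =>
        rw [Fin.sum_univ_add]
        simp only [dbl_ll, dbl_lr, Finset.sum_const_zero, zero_add]
        exact hA.2.2 i₁
    | right i₂ =>
        rw [Fin.sum_univ_add]
        simp only [dbl_rl, dbl_rr, Finset.sum_const_zero, add_zero]
        exact hA.2.2 i₂

lemma halfId_isSymmStochastic (hA : IsSymmStochastic A) : IsSymmStochastic (halfId A) := by
  refine ⟨fun i j => ?_, fun i j => ?_, fun i => ?_⟩
  · simp only [halfId, hA.1 i j]
    congr 1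
    simp [eq_comm]
  · have := hA.2.1 i j
    unfold halfId; positivity
  · unfold halfId
    rw [← Finset.sum_div, Finset.sum_add_distrib, hA.2.2 i]
    simp

lemma Ssum_addCases (x y : Fin n → X) :
    Ssum p (Fin.addCases x y) (Fin.addCases x y)
      = Ssum p x x + Ssum p x y + Ssum p y x + Ssum p y y := by
  simp only [Ssum, Fin.sum_univ_add, Fin.addCases_left, Fin.addCases_right,
    Finset.sum_add_distrib]
  ring

lemma Qsum_dbl_addCases (x y : Fin n → X) :
    Qsum (dbl A) p (Fin.addCases x y) (Fin.addCases x y) = Qsum A p x y + Qsum A p y x := by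
  simp only [Qsum, Fin.sum_univ_add, Fin.addCases_left, Fin.addCases_right,
    dbl_ll, dbl_lr, dbl_rl, dbl_rr, zero_mul, Finset.sum_const_zero,
    Finset.sum_add_distrib]
  ring

lemma Ssum_split (z : Fin (n+n) → X) :
    Ssum p z z = Ssum p (fun i => z (Fin.castAdd n i)) (fun i => z (Fin.castAdd n i))
      + Ssum p (fun i => z (Fin.castAdd n i)) (fun i => z (Fin.natAdd n i))
      + Ssum p (fun i => z (Fin.natAdd n i)) (fun i => z (Fin.castAdd n i))
      + Ssum p (fun i => z (Fin.natAdd n i)) (fun i => z (Fin.natAdd n i)) := by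
  simp only [Ssum, Fin.sum_univ_add, Finset.sum_add_distrib]
  ring

lemma Qsum_dbl_split (z : Fin (n+n) → X) :
    Qsum (dbl A) p z z
      = Qsum A p (fun i => z (Fin.castAdd n i)) (fun i => z (Fin.natAdd n i))
      + Qsum A p (fun i => z (Fin.natAdd n i)) (fun i => z (Fin.castAdd n i)) := by
  simp only [Qsum, Fin.sum_univ_add, dbl_ll, dbl_lr, dbl_rl, dbl_rr, zero_mul,
    Finset.sum_const_zero, Finset.sum_add_distrib]
  ring

lemma Qsum_halfId (x y : Fin n → X) :
    Qsum (halfId A) p x y = (Qsum A p x y + Dsum p x y) / 2 := by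
  have hpt : ∀ i j : Fin n, halfId A i j * dist (x i) (y j) ^ p
      = A i j * dist (x i) (y j) ^ p / 2 + (if i = j then dist (x i) (y j) ^ p else 0) / 2 := by
    intro i j
    by_cases h : i = j <;> simp [halfId, h] <;> ring
  rw [Qsum]
  simp_rw [hpt, Finset.sum_add_distrib, ← Finset.sum_div]
  rw [Qsum, Dsum, add_div]
  congr 2
  refine Finset.sum_congr rfl fun i _ => ?_
  rw [Finset.sum_ite_eq, if_pos (Finset.mem_univ i)]

lemma Dsum_self (hp : 1 ≤ p) (x : Fin n → X) : Dsum p x x = 0 := by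
  rw [Dsum]
  refine Finset.sum_eq_zero fun i _ => ?_
  rw [dist_self, Real.zero_rpow (by linarith)]

end Dbl

section Interface
open ENNReal
variable {p : ℝ} {n : ℕ} {X : Type*} [PseudoMetricSpace X] {A : Matrix (Fin n) (Fin n) ℝ}

lemma sInf_le_mul_sInf (c : ℝ≥0∞) (hc0 : c ≠ 0) (hct : c ≠ ⊤) {S T : Set ℝ≥0∞}
    (h : ∀ g ∈ T, g ≠ ⊤ → sInf S ≤ c * g) : sInf S ≤ c * sInf T := by
  rw [mul_comm, ← ENNReal.div_le_iff_le_mul (Or.inl hc0) (Or.inl hct)]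
  refine le_sInf fun g hg => ?_
  rcases eq_or_ne g ⊤ with rfl | hgt
  · exact le_top
  · rw [ENNReal.div_le_iff_le_mul (Or.inl hc0) (Or.inl hct), mul_comm]
    exact h g hg hgt

lemma ofReal_cond_iff (hn : 0 < n) {G S Q : ℝ} (hG : 0 ≤ G) (hQ : 0 ≤ Q) :
    (ENNReal.ofReal (S / (n : ℝ) ^ 2) ≤ ENNReal.ofReal G / (n : ℝ≥0∞) * ENNReal.ofReal Q)
      ↔ S / (n : ℝ) ^ 2 ≤ G / (n : ℝ) * Q := by
  have hn' : (0:ℝ) < n := by exact_mod_cast hn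
  rw [← ENNReal.ofReal_natCast, ← ENNReal.ofReal_div_of_pos hn',
    ← ENNReal.ofReal_mul (div_nonneg hG hn'.le),
    ENNReal.ofReal_le_ofReal_iff (mul_nonneg (div_nonneg hG hn'.le) hQ)]

lemma sInf_pos_set_eq_zero {S : Set ℝ≥0∞} (h : ∀ g : ℝ≥0∞, 0 < g → g ∈ S) : sInf S = 0 := by
  refine le_antisymm ?_ (zero_le)
  refine ENNReal.le_of_forall_pos_le_add fun ε hε _ => ?_
  rw [zero_add]
  exact sInf_le (h ε (by exact_mod_cast hε))

lemma gammaNL_le (hn : 0 < n) (hA : ∀ i j, 0 ≤ A i j) {G : ℝ} (hG : 0 < G)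
    (h : ∀ x : Fin n → X, Ssum p x x / (n:ℝ)^2 ≤ G / (n:ℝ) * Qsum A p x x) :
    gammaNL A X p ≤ ENNReal.ofReal G := by
  refine sInf_le ⟨ENNReal.ofReal_pos.mpr hG, fun x => ?_⟩
  exact (ofReal_cond_iff hn hG.le (Qsum_nonneg hA x x)).mpr (h x)

lemma gammaPlusNL_le (hn : 0 < n) (hA : ∀ i j, 0 ≤ A i j) {G : ℝ} (hG : 0 < G)
    (h : ∀ x y : Fin n → X, Ssum p x y / (n:ℝ)^2 ≤ G / (n:ℝ) * Qsum A p x y) :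
    gammaPlusNL A X p ≤ ENNReal.ofReal G := by
  refine sInf_le ⟨ENNReal.ofReal_pos.mpr hG, fun x y => ?_⟩
  exact (ofReal_cond_iff hn hG.le (Qsum_nonneg hA x y)).mpr (h x y)

lemma gamma_cond_real (hn : 0 < n) (hA : ∀ i j, 0 ≤ A i j) {g : ℝ≥0∞} (hg0 : 0 < g)
    (hgt : g ≠ ⊤)
    (h : ∀ x : Fin n → X,
      ENNReal.ofReal ((∑ i, ∑ j, dist (x i) (x j) ^ p) / (n : ℝ) ^ 2) ≤
        g / (n : ℝ≥0∞) * ENNReal.ofReal (∑ i, ∑ j, A i j * dist (x i) (x j) ^ p)) :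
    ∀ x : Fin n → X, Ssum p x x / (n:ℝ)^2 ≤ g.toReal / (n:ℝ) * Qsum A p x x := by
  intro x
  have hG : 0 < g.toReal := ENNReal.toReal_pos hg0.ne' hgt
  have h2 := h x
  rw [← ENNReal.ofReal_toReal hgt] at h2
  exact (ofReal_cond_iff hn hG.le (Qsum_nonneg hA x x)).mp h2

lemma gammaPlus_cond_real (hn : 0 < n) (hA : ∀ i j, 0 ≤ A i j) {g : ℝ≥0∞} (hg0 : 0 < g)
    (hgt : g ≠ ⊤)
    (h : ∀ x y : Fin n → X,
      ENNReal.ofReal ((∑ i, ∑ j, dist (x i) (y j) ^ p) / (n : ℝ) ^ 2) ≤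
        g / (n : ℝ≥0∞) * ENNReal.ofReal (∑ i, ∑ j, A i j * dist (x i) (y j) ^ p)) :
    ∀ x y : Fin n → X, Ssum p x y / (n:ℝ)^2 ≤ g.toReal / (n:ℝ) * Qsum A p x y := by
  intro x y
  have hG : 0 < g.toReal := ENNReal.toReal_pos hg0.ne' hgt
  have h2 := h x y
  rw [← ENNReal.ofReal_toReal hgt] at h2
  exact (ofReal_cond_iff hn hG.le (Qsum_nonneg hA x y)).mp h2

end Interface

section Transfer
variable {p : ℝ} {n : ℕ} {A : Matrix (Fin n) (Fin n) ℝ}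

lemma ofReal_two' : ENNReal.ofReal (2:ℝ) = 2 := by norm_num

lemma step_i1 {X : Type*} [PseudoMetricSpace X] (hn : 0 < n)
    (hA : IsSymmStochastic A) : gammaPlusNL A X p ≤ 2 * gammaNL (dbl A) X p := by
  refine sInf_le_mul_sInf 2 (by norm_num) (by norm_num) fun g hg hgt => ?_
  obtain ⟨hg0, hcond⟩ := hg
  have hnn : 0 < n + n := by omega
  have hreal := gamma_cond_real (A := dbl A) hnn (dbl_isSymmStochastic hA).2.1 hg0 hgt hcond
  have hG : 0 < g.toReal := ENNReal.toReal_pos hg0.ne' hgt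
  set G := g.toReal with hGdef
  have h2g : (2:ℝ≥0∞) * g = ENNReal.ofReal (2 * G) := by
    rw [ENNReal.ofReal_mul (by norm_num), ofReal_two', ENNReal.ofReal_toReal hgt]
  have goal2 : gammaPlusNL A X p ≤ ENNReal.ofReal (2 * G) := by
    refine gammaPlusNL_le hn hA.2.1 (by positivity) fun x y => ?_
    have hz := hreal (Fin.addCases x y)
    rw [Ssum_addCases, Qsum_dbl_addCases, Ssum_comm y x, Qsum_comm hA.1 y x] at hz
    have hN : (0:ℝ) < n := by exact_mod_cast hn
    have hcast : ((n+n : ℕ) : ℝ) = (n:ℝ) + n := by push_cast; ring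
    rw [hcast] at hz
    have hSxx := Ssum_nonneg (p := p) x x
    have hSyy := Ssum_nonneg (p := p) y y
    rw [div_le_iff₀ (by positivity)] at hz ⊢
    have hz' : Ssum p x x + Ssum p x y + Ssum p x y + Ssum p y y
        ≤ 4*((n:ℝ)*(G*Qsum A p x y)) := by
      calc _ ≤ G/((n:ℝ)+n)*(Qsum A p x y + Qsum A p x y)*(((n:ℝ)+n)^2) := hz
        _ = 4*((n:ℝ)*(G*Qsum A p x y)) := by field_simp; ring
    calc Ssum p x y ≤ 2*((n:ℝ)*(G*Qsum A p x y)) := by linarith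
      _ = 2*G/(n:ℝ)*Qsum A p x y*(n:ℝ)^2 := by field_simp
  rw [h2g]; exact goal2

lemma step_i2 {Y : Type*} [PseudoMetricSpace Y] (hp : 1 ≤ p) (hn : 0 < n)
    (hA : IsSymmStochastic A) :
    gammaNL (dbl A) Y p ≤ (2:ℝ≥0∞) ^ p * gammaPlusNL A Y p := by
  have hp0 : (0:ℝ) ≤ p := by linarith
  have hc0 : ((2:ℝ≥0∞) ^ p) ≠ 0 := by
    simp [ENNReal.rpow_eq_zero_iff]
  have hct : ((2:ℝ≥0∞) ^ p) ≠ ⊤ := by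
    exact ENNReal.rpow_ne_top_of_nonneg hp0 (by norm_num)
  refine sInf_le_mul_sInf _ hc0 hct fun g hg hgt => ?_
  obtain ⟨hg0, hcond⟩ := hg
  have hreal := gammaPlus_cond_real hn hA.2.1 hg0 hgt hcond
  have hG : 0 < g.toReal := ENNReal.toReal_pos hg0.ne' hgt
  set G := g.toReal with hGdef
  have hcg : (2:ℝ≥0∞) ^ p * g = ENNReal.ofReal ((2:ℝ) ^ p * G) := by
    rw [ENNReal.ofReal_mul (Real.rpow_nonneg (by norm_num) p),
      ← ENNReal.ofReal_rpow_of_pos (by norm_num : (0:ℝ) < 2), ofReal_two',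
      ENNReal.ofReal_toReal hgt]
  rw [hcg]
  have hnn : 0 < n + n := by omega
  have h2p : (1:ℝ) ≤ 2 ^ p := Real.one_le_rpow one_le_two hp0
  have hrp : (0:ℝ) < 2 ^ p := by linarith
  refine gammaNL_le hnn (dbl_isSymmStochastic hA).2.1 (by positivity) fun z => ?_
  set x : Fin n → Y := fun i => z (Fin.castAdd n i) with hx
  set y : Fin n → Y := fun i => z (Fin.natAdd n i) with hy
  rw [Ssum_split z, Qsum_dbl_split z, ← hx, ← hy, Qsum_comm hA.1 (fun i => z (Fin.natAdd n i)) (fun i => z (Fin.castAdd n i)), ← hx, ← hy]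
  have hN : (0:ℝ) < n := by exact_mod_cast hn
  have hcast : ((n+n : ℕ) : ℝ) = (n:ℝ) + n := by push_cast; ring
  rw [hcast]
  have hQ := Qsum_nonneg (p := p) hA.2.1 x y
  have hSxy := Ssum_nonneg (p := p) x y
  have c2 : Ssum p x y ≤ (n:ℝ)*(G*Qsum A p x y) := by
    have h1 := hreal x y
    rw [div_le_iff₀ (by positivity)] at h1
    calc Ssum p x y ≤ G/(n:ℝ)*Qsum A p x y*(n:ℝ)^2 := h1
      _ = (n:ℝ)*(G*Qsum A p x y) := by field_simp
  have c1 : Ssum p x x + Ssum p x y + Ssum p y x + Ssum p y y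
      ≤ (2*2^p+2) * Ssum p x y := by
    have e1 : Ssum p x x ≤ 2 ^ p * Ssum p x y := Ssum_self_le hp hn x y
    have e2 : Ssum p y y ≤ 2 ^ p * Ssum p x y := by
      have := Ssum_self_le hp hn y x
      rwa [Ssum_comm y x] at this
    rw [Ssum_comm y x]
    linarith
  have c3 : (2*2^p+2) * Ssum p x y ≤ (4*2^p) * ((n:ℝ)*(G*Qsum A p x y)) := by
    refine mul_le_mul (by linarith) c2 hSxy (by positivity)
  rw [div_le_iff₀ (by positivity)]
  calc Ssum p x x + Ssum p x y + Ssum p y x + Ssum p y y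
      ≤ (4*2^p) * ((n:ℝ)*(G*Qsum A p x y)) := c1.trans c3
    _ = 2^p*G/((n:ℝ)+n)*(Qsum A p x y + Qsum A p x y)*(((n:ℝ)+n)^2) := by
        field_simp; ring

lemma step_ii1 {X : Type*} [PseudoMetricSpace X] (hp : 1 ≤ p) (hn : 0 < n)
    (hA : IsSymmStochastic A) :
    gammaNL A X p ≤ (1/2 : ℝ≥0∞) * gammaPlusNL (halfId A) X p := by
  refine sInf_le_mul_sInf _ (by norm_num) (by norm_num) fun g hg hgt => ?_
  obtain ⟨hg0, hcond⟩ := hg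
  have hreal := gammaPlus_cond_real hn (halfId_isSymmStochastic hA).2.1 hg0 hgt hcond
  have hG : 0 < g.toReal := ENNReal.toReal_pos hg0.ne' hgt
  set G := g.toReal with hGdef
  have hcg : (1/2:ℝ≥0∞) * g = ENNReal.ofReal (G/2) := by
    rw [ENNReal.ofReal_div_of_pos (by norm_num), ofReal_two', ENNReal.ofReal_toReal hgt,
      one_div, div_eq_mul_inv, mul_comm]
  rw [hcg]
  refine gammaNL_le hn hA.2.1 (by positivity) fun x => ?_
  have h1 := hreal x x
  rw [Qsum_halfId, Dsum_self hp, add_zero] at h1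
  calc Ssum p x x / (n:ℝ)^2 ≤ G/(n:ℝ) * (Qsum A p x x / 2) := h1
    _ = G/2/(n:ℝ) * Qsum A p x x := by ring

/-- the cut bound: any real certificate for `γ(A,Y)` is at least `1/3` when `n ≥ 2` and
`Y` contains two points at positive distance. -/
lemma cut_bound {Y : Type*} [PseudoMetricSpace Y] (hp : 1 ≤ p) (hn2 : 2 ≤ n)
    (hA : IsSymmStochastic A) {a b : Y} (hab : 0 < dist a b) {G : ℝ} (hG : 0 < G)
    (hreal : ∀ x : Fin n → Y, Ssum p x x / (n:ℝ)^2 ≤ G / (n:ℝ) * Qsum A p x x) :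
    1/3 ≤ G := by
  have hn : 0 < n := by omega
  have hN : (0:ℝ) < n := by exact_mod_cast hn
  have hN2 : (2:ℝ) ≤ n := by exact_mod_cast hn2
  set r : ℝ := dist a b with hr
  have hrp : (0:ℝ) < r ^ p := Real.rpow_pos_of_pos hab p
  set i₀ : Fin n := ⟨0, hn⟩ with hi₀
  set x : Fin n → Y := fun i => if i = i₀ then a else b with hxdef
  have hp0 : p ≠ 0 := by linarith
  have hcol : ∑ i, A i i₀ = 1 := by
    rw [Finset.sum_congr rfl fun i _ => hA.1 i i₀]; exact hA.2.2 i₀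
  -- upper bound for Q
  have hQ : Qsum A p x x ≤ 2 * r ^ p := by
    have hpt : ∀ i j : Fin n, A i j * dist (x i) (x j) ^ p
        ≤ (if i = i₀ then A i j * r ^ p else 0) + (if j = i₀ then A i j * r ^ p else 0) := by
      intro i j
      have hAij := hA.2.1 i j
      by_cases hi : i = i₀
      · by_cases hj : j = i₀
        · simp only [hxdef, if_pos hi, if_pos hj, dist_self, Real.zero_rpow hp0, mul_zero]
          positivity
        · simp only [hxdef, if_pos hi, if_neg hj]
          have : dist a b ^ p = r ^ p := rfl
          rw [this, add_zero]
      · by_cases hj : j = i₀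
        · simp only [hxdef, if_neg hi, if_pos hj, zero_add]
          rw [dist_comm b a]
        · simp only [hxdef, if_neg hi, if_neg hj, dist_self, Real.zero_rpow hp0, mul_zero,
            add_zero]
          exact le_refl 0
    calc Qsum A p x x ≤ ∑ i, ∑ j, ((if i = i₀ then A i j * r ^ p else 0)
          + (if j = i₀ then A i j * r ^ p else 0)) :=
          Finset.sum_le_sum fun i _ => Finset.sum_le_sum fun j _ => hpt i j
      _ = 2 * r ^ p := by
          simp_rw [Finset.sum_add_distrib]
          have e1 : (∑ i, ∑ j, if i = i₀ then A i j * r ^ p else 0) = r ^ p := by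
            have h1 : ∀ i : Fin n, (∑ j, if i = i₀ then A i j * r ^ p else 0)
                = if i = i₀ then (∑ j, A i j) * r ^ p else 0 := by
              intro i; by_cases h : i = i₀ <;> simp [h, Finset.sum_mul]
            simp_rw [h1]
            rw [Finset.sum_ite_eq' Finset.univ i₀]
            simp [hA.2.2 i₀]
          have e2 : (∑ i, ∑ j, if j = i₀ then A i j * r ^ p else 0) = r ^ p := by
            have h1 : ∀ i : Fin n, (∑ j, if j = i₀ then A i j * r ^ p else 0)
                = A i i₀ * r ^ p := by
              intro i; rw [Finset.sum_ite_eq' Finset.univ i₀]; simp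
            simp_rw [h1, ← Finset.sum_mul, hcol, one_mul]
          rw [e1, e2]; ring
  -- lower bound for S
  have hrow0 : ∀ j : Fin n, dist (x i₀) (x j) ^ p = if j = i₀ then 0 else r ^ p := by
    intro j
    by_cases h : j = i₀ <;> simp [hxdef, h, dist_self, Real.zero_rpow hp0, hr]
  have hSxxlow : 2 * ((n:ℝ) * r ^ p - r ^ p) ≤ Ssum p x x := by
    have hbound : ∀ i : Fin n,
        (if i = i₀ then (n:ℝ) * r ^ p - r ^ p else r ^ p) ≤ ∑ j, dist (x i) (x j) ^ p := by
      intro i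
      by_cases h : i = i₀
      · rw [if_pos h, h]
        have e3 : ∑ j, dist (x i₀) (x j) ^ p = ∑ j : Fin n, (if j = i₀ then 0 else r ^ p) :=
          Finset.sum_congr rfl fun j _ => hrow0 j
        have e4 : ∑ j : Fin n, (if j = i₀ then (0:ℝ) else r ^ p) = (n:ℝ) * r ^ p - r ^ p := by
          have h5 : ∀ j : Fin n, (if j = i₀ then (0:ℝ) else r ^ p)
              = r ^ p - (if j = i₀ then r ^ p else 0) := fun j => by
            by_cases h : j = i₀ <;> simp [h]
          simp_rw [h5]
          rw [Finset.sum_sub_distrib, Finset.sum_const, Finset.card_univ, Fintype.card_fin,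
            nsmul_eq_mul, Finset.sum_ite_eq' Finset.univ i₀]
          simp
        rw [e3, e4]
      · rw [if_neg h]
        have hj0 : dist (x i) (x i₀) ^ p = r ^ p := by
          have : dist (x i) (x i₀) = dist a b := by
            simp only [hxdef, if_neg h, if_pos rfl]
            exact dist_comm b a
          rw [this]
        calc r ^ p = dist (x i) (x i₀) ^ p := hj0.symm
          _ ≤ ∑ j, dist (x i) (x j) ^ p :=
            Finset.single_le_sum (fun j _ => Real.rpow_nonneg dist_nonneg p)
              (Finset.mem_univ i₀)
    calc 2 * ((n:ℝ) * r ^ p - r ^ p)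
        = ∑ i : Fin n, (if i = i₀ then (n:ℝ) * r ^ p - r ^ p else r ^ p) := by
          have h6 : ∀ i : Fin n, (if i = i₀ then (n:ℝ) * r ^ p - r ^ p else r ^ p)
              = r ^ p + (if i = i₀ then (n:ℝ) * r ^ p - 2 * r ^ p else 0) := fun i => by
            by_cases h : i = i₀ <;> simp [h] <;> ring
          simp_rw [h6]
          rw [Finset.sum_add_distrib, Finset.sum_const, Finset.card_univ, Fintype.card_fin,
            nsmul_eq_mul, Finset.sum_ite_eq' Finset.univ i₀]
          simp only [Finset.mem_univ, if_true]
          ring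
      _ ≤ Ssum p x x := Finset.sum_le_sum fun i _ => hbound i
  -- combine
  have hmain := hreal x
  have h1 : 2 * ((n:ℝ) * r ^ p - r ^ p) / (n:ℝ)^2 ≤ G / (n:ℝ) * (2 * r ^ p) := by
    calc 2 * ((n:ℝ) * r ^ p - r ^ p) / (n:ℝ)^2 ≤ Ssum p x x / (n:ℝ)^2 := by
          gcongr
      _ ≤ G / (n:ℝ) * Qsum A p x x := hmain
      _ ≤ G / (n:ℝ) * (2 * r ^ p) :=
          mul_le_mul_of_nonneg_left hQ (by positivity)
  have key : (n:ℝ) - 1 ≤ G * n := by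
    rw [div_le_iff₀ (by positivity : (0:ℝ) < (n:ℝ)^2)] at h1
    have e2 : G/(n:ℝ)*(2*r^p)*(n:ℝ)^2 = 2*r^p*(G*(n:ℝ)) := by field_simp
    rw [e2] at h1
    nlinarith [hrp]
  nlinarith [key, hN2, hG]

lemma step_ii2 {Y : Type*} [PseudoMetricSpace Y] (hp : 1 ≤ p) (hn2 : 2 ≤ n)
    (hA : IsSymmStochastic A) (a b : Y) (hab : 0 < dist a b) :
    gammaPlusNL (halfId A) Y p ≤ (2:ℝ≥0∞) ^ (2*p+1) * gammaNL A Y p := by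
  have hn : 0 < n := by omega
  have hN : (0:ℝ) < n := by exact_mod_cast hn
  have hc0 : ((2:ℝ≥0∞) ^ (2*p+1)) ≠ 0 := by simp [ENNReal.rpow_eq_zero_iff]
  have hct : ((2:ℝ≥0∞) ^ (2*p+1)) ≠ ⊤ :=
    ENNReal.rpow_ne_top_of_nonneg (by linarith) (by norm_num)
  refine sInf_le_mul_sInf _ hc0 hct fun g hg hgt => ?_
  obtain ⟨hg0, hcond⟩ := hg
  have hreal := gamma_cond_real hn hA.2.1 hg0 hgt hcond
  have hG : 0 < g.toReal := ENNReal.toReal_pos hg0.ne' hgt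
  set G := g.toReal with hGdef
  have hG3 : 1/3 ≤ G := cut_bound hp hn2 hA hab hG hreal
  have h2p1 : (0:ℝ) < (2:ℝ) ^ (2*p+1) := Real.rpow_pos_of_pos (by norm_num) _
  have hcg : (2:ℝ≥0∞) ^ (2*p+1) * g = ENNReal.ofReal ((2:ℝ) ^ (2*p+1) * G) := by
    rw [ENNReal.ofReal_mul h2p1.le,
      ← ENNReal.ofReal_rpow_of_pos (by norm_num : (0:ℝ) < 2), ofReal_two',
      ENNReal.ofReal_toReal hgt]
  rw [hcg]
  refine gammaPlusNL_le hn (halfId_isSymmStochastic hA).2.1 (by positivity) fun x y => ?_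
  rw [Qsum_halfId]
  set E := (2:ℝ) ^ (p-1) with hEdef
  have hE1 : 1 ≤ E := Real.one_le_rpow one_le_two (by linarith)
  have hE0 : 0 < E := by linarith
  have hEform : (2:ℝ) ^ (2*p+1) = 8 * (E * E) := by
    have h3 : (8:ℝ) = (2:ℝ) ^ (3:ℝ) := by
      rw [show (3:ℝ) = ((3:ℕ):ℝ) by norm_num, Real.rpow_natCast]; norm_num
    rw [hEdef, h3, ← Real.rpow_add two_pos, ← Real.rpow_add two_pos]
    congr 1; ring
  set T := Qsum A p x y with hT'
  set D := Dsum p x y with hD'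
  have hT : 0 ≤ T := Qsum_nonneg hA.2.1 x y
  have hD : 0 ≤ D := Dsum_nonneg x y
  have f1 : Ssum p x y ≤ E * (Ssum p x x + (n:ℝ) * D) := Ssum_le_self_add hp x y
  have f2 : Qsum A p x x ≤ E * (T + D) := Qsum_self_le hp hA x y
  have f3 : Ssum p x x ≤ (n:ℝ) * (G * Qsum A p x x) := by
    have h1 := hreal x
    rw [div_le_iff₀ (by positivity)] at h1
    calc Ssum p x x ≤ G/(n:ℝ) * Qsum A p x x * (n:ℝ)^2 := h1
      _ = (n:ℝ) * (G * Qsum A p x x) := by field_simp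
  have c1 : Ssum p x y ≤ E * ((n:ℝ) * (G * (E * (T + D))) + (n:ℝ) * D) := by
    refine f1.trans (mul_le_mul_of_nonneg_left ?_ hE0.le)
    have h4 : (n:ℝ) * (G * Qsum A p x x) ≤ (n:ℝ) * (G * (E * (T + D))) :=
      mul_le_mul_of_nonneg_left (mul_le_mul_of_nonneg_left f2 hG.le) hN.le
    linarith [f3.trans h4]
  have c2 : E * ((n:ℝ) * (G * (E * (T + D))) + (n:ℝ) * D)
      ≤ 4 * (E * E) * G * (T + D) * (n:ℝ) := by
    have t1 : 0 ≤ (3*G - 1) * (E * E * ((n:ℝ) * (T + D))) := by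
      have : (0:ℝ) ≤ 3*G - 1 := by linarith
      positivity
    have t2 : 0 ≤ (E - 1) * (E * ((n:ℝ) * D)) := by
      have : (0:ℝ) ≤ E - 1 := by linarith
      positivity
    have t3 : 0 ≤ E * E * ((n:ℝ) * T) := by positivity
    nlinarith [t1, t2, t3]
  rw [div_le_iff₀ (by positivity)]
  calc Ssum p x y ≤ 4 * (E * E) * G * (T + D) * (n:ℝ) := c1.trans c2
    _ = (2:ℝ)^(2*p+1) * G / (n:ℝ) * ((T + D)/2) * (n:ℝ)^2 := by
        rw [hEform]; field_simp; ring

lemma gammaPlusNL_zero_n0 {X : Type*} [PseudoMetricSpace X] (A : Matrix (Fin 0) (Fin 0) ℝ) :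
    gammaPlusNL A X p = 0 := by
  apply sInf_pos_set_eq_zero
  intro g hg
  exact ⟨hg, fun x y => by simp⟩

lemma gammaNL_zero_low {X : Type*} [PseudoMetricSpace X] (hp : 1 ≤ p) (hn : n ≤ 1) :
    gammaNL A X p = 0 := by
  apply sInf_pos_set_eq_zero
  intro g hg
  refine ⟨hg, fun x => ?_⟩
  have h0 : (∑ i, ∑ j, dist (x i) (x j) ^ p) = 0 := by
    interval_cases n
    · simp
    · simp [dist_self, Real.zero_rpow (show p ≠ 0 by linarith)]
  rw [h0, zero_div, ENNReal.ofReal_zero]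
  exact zero_le

lemma gammaPlusNL_zero_subsingleton {Y : Type*} [PseudoMetricSpace Y] (hp : 1 ≤ p)
    (hY : ∀ a b : Y, a = b) (B : Matrix (Fin n) (Fin n) ℝ) :
    gammaPlusNL B Y p = 0 := by
  apply sInf_pos_set_eq_zero
  intro g hg
  refine ⟨hg, fun x y => ?_⟩
  have h0 : (∑ i, ∑ j, dist (x i) (y j) ^ p) = 0 :=
    Finset.sum_eq_zero fun i _ => Finset.sum_eq_zero fun j _ => by
      rw [hY (x i) (y j), dist_self, Real.zero_rpow (show p ≠ 0 by linarith)]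
  rw [h0, zero_div, ENNReal.ofReal_zero]
  exact zero_le

end Transfer


/-- **Proposition (comparison of `γ` and `γ₊` are essentially the same question).**
(i) If `Ψ` is increasing and `γ(A,d_X^p) ≤ Ψ(γ(A,d_Y^p))` for all symmetric stochastic `A`,
then `γ₊(A,d_X^p) ≤ 2·Ψ(2^p·γ₊(A,d_Y^p))` for all such `A`.
(ii) Conversely, if `Φ` is increasing and `γ₊(A,d_X^p) ≤ Φ(γ₊(A,d_Y^p))` for all symmetric
stochastic `A`, then `γ(A,d_X^p) ≤ (1/2)·Φ(2^{2p+1}·γ(A,d_Y^p))` for all such `A`. -/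
theorem gamma_gammaPlus_comparison (p : ℝ) (hp : 1 ≤ p)
    (X Y : Type*) [MetricSpace X] [MetricSpace Y] :
    (∀ Ψ : ℝ≥0∞ → ℝ≥0∞, Monotone Ψ →
      (∀ (n : ℕ) (A : Matrix (Fin n) (Fin n) ℝ), IsSymmStochastic A →
        gammaNL A X p ≤ Ψ (gammaNL A Y p)) →
      ∀ (n : ℕ) (A : Matrix (Fin n) (Fin n) ℝ), IsSymmStochastic A →
        gammaPlusNL A X p ≤ 2 * Ψ ((2 : ℝ≥0∞) ^ p * gammaPlusNL A Y p)) ∧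
    (∀ Φ : ℝ≥0∞ → ℝ≥0∞, Monotone Φ →
      (∀ (n : ℕ) (A : Matrix (Fin n) (Fin n) ℝ), IsSymmStochastic A →
        gammaPlusNL A X p ≤ Φ (gammaPlusNL A Y p)) →
      ∀ (n : ℕ) (A : Matrix (Fin n) (Fin n) ℝ), IsSymmStochastic A →
        gammaNL A X p ≤ Φ ((2 : ℝ≥0∞) ^ (2 * p + 1) * gammaNL A Y p) / 2) := by
  constructor
  · intro Ψ hΨ hcomp n A hA
    rcases Nat.eq_zero_or_pos n with rfl | hn
    · rw [gammaPlusNL_zero_n0 A]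
      exact zero_le
    · calc gammaPlusNL A X p ≤ 2 * gammaNL (dbl A) X p := step_i1 hn hA
        _ ≤ 2 * Ψ (gammaNL (dbl A) Y p) :=
            mul_le_mul_right (hcomp (n+n) (dbl A) (dbl_isSymmStochastic hA)) 2
        _ ≤ 2 * Ψ ((2:ℝ≥0∞) ^ p * gammaPlusNL A Y p) :=
            mul_le_mul_right (hΨ (step_i2 hp hn hA)) 2
  · intro Φ hΦ hcomp n A hA
    by_cases hn2 : 2 ≤ n
    · have hn : 0 < n := by omega
      have h1 : gammaNL A X p ≤ (1/2 : ℝ≥0∞) * gammaPlusNL (halfId A) X p :=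
        step_ii1 hp hn hA
      have h2 : gammaPlusNL (halfId A) X p ≤ Φ (gammaPlusNL (halfId A) Y p) :=
        hcomp n (halfId A) (halfId_isSymmStochastic hA)
      have h3 : gammaPlusNL (halfId A) Y p ≤ (2:ℝ≥0∞) ^ (2*p+1) * gammaNL A Y p := by
        by_cases hY : ∀ a b : Y, a = b
        · rw [gammaPlusNL_zero_subsingleton hp hY (halfId A)]
          exact zero_le
        · push_neg at hY
          obtain ⟨a, b, hab⟩ := hY
          exact step_ii2 hp hn2 hA a b (dist_pos.mpr hab)
      calc gammaNL A X p ≤ (1/2 : ℝ≥0∞) * gammaPlusNL (halfId A) X p := h1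
        _ ≤ (1/2 : ℝ≥0∞) * Φ ((2:ℝ≥0∞) ^ (2*p+1) * gammaNL A Y p) :=
            mul_le_mul_right (h2.trans (hΦ h3)) _
        _ = Φ ((2:ℝ≥0∞) ^ (2*p+1) * gammaNL A Y p) / 2 := by
            rw [mul_comm, one_div, div_eq_mul_inv]
    · rw [gammaNL_zero_low hp (by omega)]
      exact zero_le
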